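/- arXiv:2403.06177 — 3 statements merged into one kernel-verified Lean document; each statement's English description precedes it below -/
import Mathlib

section
/- Let μ be a finitely additive probability measure on an algebra Σ of subsets of X. Then μ satisfies the Anger–Lembcke cover inequality: for all non-negative integers m, n, k and every (n,k)-cover U_1,…,U_m of (U, X) with U ∈ Σ, k + n·μ(U) ≤ Σ_{i=1}^m μ(U_i). -/
open scoped Classical

/-- A finite sequence `Us` covers `W` at least `n` times. -/
def Covers {X : Type*} {m : ℕ} (Us : Fin m → Set X) (W : Set X) (n : ℕ) : Prop :=
  ∀ x ∈ W, n ≤ (Finset.univ.filter fun i => x ∈ Us i).card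

/-- `Us` is an `(n,k)`-cover of `(W, X)`. -/
def IsNKCover {X : Type*} {m : ℕ} (Us : Fin m → Set X) (W : Set X) (n k : ℕ) : Prop :=
  Covers Us Set.univ k ∧ Covers Us W (n + k)

/-- The Anger–Lembcke cover inequality for `g` on the algebra `S`. -/
def CoverIneq {X : Type*} (S : Set (Set X)) (g : Set X → ℝ) : Prop :=
  ∀ (m n k : ℕ) (Us : Fin m → Set X) (W : Set X), W ∈ S → (∀ i, Us i ∈ S) →
    IsNKCover Us W n k → (k : ℝ) + (n : ℝ) * g W ≤ ∑ i, g (Us i)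

/-- every finitely additive probability measure satisfies the
Anger–Lembcke cover inequality. -/
theorem prob_measure_cover_ineq {X : Type*} (S : Set (Set X))
    (hSuniv : Set.univ ∈ S) (hScompl : ∀ A ∈ S, Aᶜ ∈ S)
    (hSunion : ∀ A ∈ S, ∀ B ∈ S, A ∪ B ∈ S)
    (μ : Set X → ℝ)
    (hrange : ∀ A ∈ S, 0 ≤ μ A ∧ μ A ≤ 1)
    (h0 : μ ∅ = 0) (h1 : μ Set.univ = 1)
    (hadd : ∀ A ∈ S, ∀ B ∈ S, Disjoint A B → μ (A ∪ B) = μ A + μ B) :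
    CoverIneq S μ := by
  intro m n k Us W hW hUs hcov
  obtain ⟨hcov1, hcov2⟩ := hcov
  have hSinter : ∀ A ∈ S, ∀ B ∈ S, A ∩ B ∈ S := by
    intro A hA B hB
    have h := hScompl _ (hSunion _ (hScompl A hA) _ (hScompl B hB))
    simpa [Set.compl_union] using h
  have hSempty : (∅ : Set X) ∈ S := by
    have := hScompl _ hSuniv
    simpa using this
  have hbInter : ∀ (s : Finset (Fin m)) (f : Fin m → Set X), (∀ i, f i ∈ S) →
      (⋂ i ∈ s, f i) ∈ S := by
    intro s f hf
    induction s using Finset.induction_on with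
    | empty => simpa using hSuniv
    | @insert a s ha ih =>
        rw [Finset.set_biInter_insert]
        exact hSinter _ (hf _) _ ih
  -- atoms
  set atom : Finset (Fin m) × Bool → Set X :=
    fun p => {x | (∀ i, x ∈ Us i ↔ i ∈ p.1) ∧ (x ∈ W ↔ p.2 = true)} with hatom
  have hmemS : ∀ p, atom p ∈ S := by
    intro p
    have heq : atom p =
        (⋂ i ∈ (Finset.univ : Finset (Fin m)), (if i ∈ p.1 then Us i else (Us i)ᶜ)) ∩
          (if p.2 then W else Wᶜ) := by
      ext x
      simp only [hatom, Set.mem_setOf_eq, Set.mem_inter_iff, Set.mem_iInter,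
        Finset.mem_univ, forall_true_left, true_implies]
      constructor
      · rintro ⟨h1, h2⟩
        refine ⟨fun i => ?_, ?_⟩
        · by_cases hi : i ∈ p.1
          · simpa [hi] using (h1 i).mpr hi
          · simp only [hi, if_false, Set.mem_compl_iff]
            exact fun h => hi ((h1 i).mp h)
        · by_cases hb : p.2 = true
          · simp only [hb, if_true]
            exact h2.mpr hb
          · simp only [hb, if_false, Set.mem_compl_iff]
            exact fun h => hb (h2.mp h)
      · rintro ⟨h1, h2⟩
        refine ⟨fun i => ?_, ?_⟩
        · have := h1 i
          by_cases hi : i ∈ p.1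
          · simp only [hi, if_true] at this
            exact ⟨fun _ => hi, fun _ => this⟩
          · simp only [hi, if_false, Set.mem_compl_iff] at this
            exact ⟨fun h => absurd h this, fun h => absurd h hi⟩
        · by_cases hb : p.2 = true
          · simp only [hb, if_true] at h2
            exact ⟨fun _ => hb, fun _ => h2⟩
          · simp only [hb, if_false, Set.mem_compl_iff] at h2
            exact ⟨fun h => absurd h h2, fun h => absurd h hb⟩
    rw [heq]
    refine hSinter _ (hbInter _ _ fun i => ?_) _ ?_
    · by_cases hi : i ∈ p.1
      · simpa [hi] using hUs i
      · simpa [hi] using hScompl _ (hUs i)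
    · by_cases hb : p.2 = true
      · simp only [hb, if_true]; exact hW
      · simp only [hb, if_false]; exact hScompl _ hW
  have hdisj : ∀ p q, p ≠ q → Disjoint (atom p) (atom q) := by
    intro p q hpq
    rw [Set.disjoint_left]
    intro x hxp hxq
    apply hpq
    obtain ⟨h1, h2⟩ := hxp
    obtain ⟨h3, h4⟩ := hxq
    have hfst : p.1 = q.1 := Finset.ext fun i => ((h1 i).symm.trans (h3 i))
    have hsnd : p.2 = q.2 := Bool.eq_iff_iff.mpr (h2.symm.trans h4)
    exact Prod.ext hfst hsnd
  have haddsum : ∀ s : Finset (Finset (Fin m) × Bool),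
      (⋃ p ∈ s, atom p) ∈ S ∧ μ (⋃ p ∈ s, atom p) = ∑ p ∈ s, μ (atom p) := by
    intro s
    induction s using Finset.induction_on with
    | empty => simpa using ⟨hSempty, h0⟩
    | @insert a s ha ih =>
        rw [Finset.set_biUnion_insert, Finset.sum_insert ha]
        have hdisj' : Disjoint (atom a) (⋃ p ∈ s, atom p) := by
          rw [Set.disjoint_iUnion₂_right]
          intro p hp
          exact hdisj a p (by rintro rfl; exact ha hp)
        exact ⟨hSunion _ (hmemS a) _ ih.1, by
          rw [hadd _ (hmemS a) _ ih.1 hdisj', ih.2]⟩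
  -- each point lies in its atom
  have hmematom : ∀ x : X,
      x ∈ atom (Finset.univ.filter (fun i => x ∈ Us i), decide (x ∈ W)) := by
    intro x
    refine ⟨fun i => ?_, ?_⟩
    · simp
    · simp [decide_eq_true_iff]
  -- decompositions
  have hUeq : ∀ j, Us j =
      ⋃ p ∈ Finset.univ.filter (fun p : Finset (Fin m) × Bool => j ∈ p.1), atom p := by
    intro j
    ext x
    simp only [Set.mem_iUnion, Finset.mem_filter, Finset.mem_univ, true_and, exists_prop]
    constructor
    · intro hx
      exact ⟨(Finset.univ.filter (fun i => x ∈ Us i), decide (x ∈ W)),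
        by simpa using hx, hmematom x⟩
    · rintro ⟨p, hj, hxp⟩
      exact (hxp.1 j).mpr hj
  have hWeq : W =
      ⋃ p ∈ Finset.univ.filter (fun p : Finset (Fin m) × Bool => p.2 = true), atom p := by
    ext x
    simp only [Set.mem_iUnion, Finset.mem_filter, Finset.mem_univ, true_and, exists_prop]
    constructor
    · intro hx
      exact ⟨(Finset.univ.filter (fun i => x ∈ Us i), decide (x ∈ W)),
        by simpa using hx, hmematom x⟩
    · rintro ⟨p, hb, hxp⟩
      exact hxp.2.mpr hb
  have hXeq : (Set.univ : Set X) =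
      ⋃ p ∈ (Finset.univ : Finset (Finset (Fin m) × Bool)), atom p := by
    ext x
    simp only [Set.mem_univ, true_iff, Set.mem_iUnion, Finset.mem_univ, exists_prop,
      true_and, exists_true_left]
    exact ⟨_, hmematom x⟩
  have hμU : ∀ j, μ (Us j) =
      ∑ p ∈ Finset.univ.filter (fun p : Finset (Fin m) × Bool => j ∈ p.1), μ (atom p) := by
    intro j; rw [hUeq j]; exact (haddsum _).2
  have hμW : μ W =
      ∑ p ∈ Finset.univ.filter (fun p : Finset (Fin m) × Bool => p.2 = true), μ (atom p) := by
    rw [hWeq]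
    exact (haddsum _).2
  have hμX : (1 : ℝ) = ∑ p : Finset (Fin m) × Bool, μ (atom p) := by
    rw [← h1, hXeq]; exact (haddsum _).2
  -- termwise inequality
  have hterm : ∀ p : Finset (Fin m) × Bool,
      (k : ℝ) * μ (atom p) + (n : ℝ) * (if p.2 = true then μ (atom p) else 0) ≤
        (p.1.card : ℝ) * μ (atom p) := by
    intro p
    by_cases hne : (atom p).Nonempty
    · obtain ⟨x, hx⟩ := hne
      have h0' : 0 ≤ μ (atom p) := (hrange _ (hmemS p)).1
      have hcard : Finset.univ.filter (fun i => x ∈ Us i) = p.1 :=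
        Finset.ext fun i => by simpa using (hx.1 i)
      have hk : (k : ℕ) ≤ p.1.card := by
        rw [← hcard]; exact hcov1 x (Set.mem_univ x)
      by_cases hb : p.2 = true
      · have hxW : x ∈ W := hx.2.mpr hb
        have hnk : n + k ≤ p.1.card := by
          rw [← hcard]; exact hcov2 x hxW
        have hnk' : (n : ℝ) + (k : ℝ) ≤ (p.1.card : ℝ) := by exact_mod_cast hnk
        rw [if_pos hb]
        nlinarith [mul_le_mul_of_nonneg_right hnk' h0']
      · have hk' : (k : ℝ) ≤ (p.1.card : ℝ) := by exact_mod_cast hk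
        rw [if_neg hb]
        nlinarith [mul_le_mul_of_nonneg_right hk' h0']
    · have : atom p = ∅ := Set.not_nonempty_iff_eq_empty.mp hne
      rw [this, h0]
      simp
  have key : ∑ p : Finset (Fin m) × Bool,
        ((k : ℝ) * μ (atom p) + (n : ℝ) * (if p.2 = true then μ (atom p) else 0)) ≤
      ∑ p : Finset (Fin m) × Bool, (p.1.card : ℝ) * μ (atom p) :=
    Finset.sum_le_sum fun p _ => hterm p
  -- rewrite RHS
  have hRHS : ∑ i, μ (Us i) = ∑ p : Finset (Fin m) × Bool, (p.1.card : ℝ) * μ (atom p) := by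
    calc ∑ i, μ (Us i)
        = ∑ i : Fin m, ∑ p ∈ Finset.univ.filter
            (fun p : Finset (Fin m) × Bool => i ∈ p.1), μ (atom p) := by
          exact Finset.sum_congr rfl fun i _ => hμU i
      _ = ∑ i : Fin m, ∑ p : Finset (Fin m) × Bool,
            (if i ∈ p.1 then μ (atom p) else 0) := by
          exact Finset.sum_congr rfl fun i _ => (Finset.sum_filter _ _)
      _ = ∑ p : Finset (Fin m) × Bool, ∑ i : Fin m,
            (if i ∈ p.1 then μ (atom p) else 0) := Finset.sum_comm
      _ = ∑ p : Finset (Fin m) × Bool, (p.1.card : ℝ) * μ (atom p) := by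
          refine Finset.sum_congr rfl fun p _ => ?_
          rw [Finset.sum_ite_mem, Finset.univ_inter, Finset.sum_const, nsmul_eq_mul]
  have hLHS : (k : ℝ) + (n : ℝ) * μ W = ∑ p : Finset (Fin m) × Bool,
      ((k : ℝ) * μ (atom p) + (n : ℝ) * (if p.2 = true then μ (atom p) else 0)) := by
    rw [Finset.sum_add_distrib, ← Finset.mul_sum, ← Finset.mul_sum, ← hμX,
      ← Finset.sum_filter, ← hμW, mul_one]
  rw [hLHS, hRHS]
  exact key
end

section
/- If g: Σ → [0,1] satisfies g(∅)=0, g(X)=1 and the Anger–Lembcke cover inequality, and g(U) = 1 − g(Uᶜ) for every U ∈ Σ, then g is a finitely additive probability measure on Σ. -/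
open scoped Classical

/-- an upper probability measure coinciding with its dual is a
finitely additive probability measure. -/
theorem selfdual_upper_prob_is_additive {X : Type*} (S : Set (Set X))
    (hSuniv : Set.univ ∈ S) (hScompl : ∀ A ∈ S, Aᶜ ∈ S)
    (hSunion : ∀ A ∈ S, ∀ B ∈ S, A ∪ B ∈ S)
    (g : Set X → ℝ) (h0 : g ∅ = 0) (h1 : g Set.univ = 1)
    (hc : CoverIneq S g)
    (hdual : ∀ U ∈ S, g U = 1 - g Uᶜ) :
    (∀ A ∈ S, 0 ≤ g A ∧ g A ≤ 1) ∧
      ∀ U ∈ S, ∀ V ∈ S, Disjoint U V → g (U ∪ V) = g U + g V := by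
  -- g W ≤ 1 for W ∈ S
  have hle1 : ∀ W ∈ S, g W ≤ 1 := by
    intro W hW
    have := hc 1 1 0 ![Set.univ] W hW (by intro i; fin_cases i <;> simpa using hSuniv)
      ⟨by intro x _; simp, by
        intro x hx
        refine Finset.one_le_card.mpr ⟨0, ?_⟩
        simp⟩
    simpa [h1] using this
  have hge0 : ∀ W ∈ S, 0 ≤ g W := by
    intro W hW
    have h := hdual W hW
    have := hle1 Wᶜ (hScompl W hW)
    linarith
  refine ⟨fun A hA => ⟨hge0 A hA, hle1 A hA⟩, ?_⟩
  intro U hU V hV hUV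
  have hUVS : U ∪ V ∈ S := hSunion U hU V hV
  -- subadditivity
  have hsub : g (U ∪ V) ≤ g U + g V := by
    have := hc 2 1 0 ![U, V] (U ∪ V) hUVS (by intro i; fin_cases i <;> simpa)
      ⟨by intro x _; simp, by
        intro x hx
        rcases hx with hx | hx
        · exact Finset.one_le_card.mpr ⟨0, by simp [hx]⟩
        · exact Finset.one_le_card.mpr ⟨1, by simp [hx]⟩⟩
    simpa [Fin.sum_univ_two] using this
  -- superadditivity via duality
  have hcompl : (U ∪ V)ᶜ = Uᶜ ∩ Vᶜ := by simp [Set.compl_union]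
  have hsup : g Uᶜ + g Vᶜ - 1 ≥ g (Uᶜ ∩ Vᶜ) := by
    have hcover : IsNKCover ![Uᶜ, Vᶜ] (Uᶜ ∩ Vᶜ) 1 1 := by
      constructor
      · intro x _
        rcases (show x ∈ Uᶜ ∨ x ∈ Vᶜ by
          by_contra h
          push_neg at h
          have hxU : x ∈ U := by simpa using h.1
          have hxV : x ∈ V := by simpa using h.2
          exact (Set.disjoint_left.mp hUV hxU) hxV) with hx | hx
        · exact Finset.one_le_card.mpr ⟨0, by simp [hx]⟩
        · exact Finset.one_le_card.mpr ⟨1, by simp [hx]⟩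
      · intro x hx
        have : (Finset.univ.filter fun i => x ∈ (![Uᶜ, Vᶜ]) i) = Finset.univ := by
          apply Finset.filter_true_of_mem
          intro i _
          fin_cases i
          · simpa using hx.1
          · simpa using hx.2
        rw [this]
        simp
    have := hc 2 1 1 ![Uᶜ, Vᶜ] (Uᶜ ∩ Vᶜ)
      (by rw [← hcompl]; exact hScompl _ hUVS)
      (by intro i; fin_cases i
          · simpa using hScompl U hU
          · simpa using hScompl V hV) hcover
    simp [Fin.sum_univ_two] at this
    linarith
  have hdU := hdual U hU
  have hdV := hdual V hV
  have hdUV := hdual (U ∪ V) hUVS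
  rw [hcompl] at hdUV
  linarith
end

section
/- Every possibility measure on an algebra Σ is a plausibility measure: if Poss satisfies Poss(∅)=0, Poss(X)=1, and Poss(U∪V)=max(Poss(U),Poss(V)), then for all U_1,…,U_n ∈ Σ, Poss(U_1 ∩ … ∩ U_n) ≤ Σ_{∅≠I⊆{1,…,n}} (−1)^{|I|+1} Poss(⋃_{i∈I} U_i). -/
open scoped Classical

noncomputable def msup {α : Type*} (a : α → ℝ) (I : Finset α) : ℝ :=
  if h : I.Nonempty then I.sup' h a else 0

lemma msup_of_nonempty {α : Type*} (a : α → ℝ) {I : Finset α} (h : I.Nonempty) :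
    msup a I = I.sup' h a := dif_pos h

lemma msup_singleton {α : Type*} (a : α → ℝ) (x : α) : msup a {x} = a x := by
  rw [msup_of_nonempty a (Finset.singleton_nonempty x), Finset.sup'_singleton]

lemma erase_nonempty_of_ne_singleton {n : ℕ} {I : Finset (Fin n)} {m : Fin n}
    (h2 : m ∈ I) (h1 : I ≠ {m}) : (I.erase m).Nonempty := by
  obtain ⟨x, hx, hxm⟩ : ∃ x ∈ I, x ≠ m := by
    by_contra hcon
    push_neg at hcon
    exact h1 (Finset.eq_singleton_iff_unique_mem.mpr ⟨h2, fun x hx => hcon x hx⟩)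
  exact ⟨x, Finset.mem_erase.mpr ⟨hxm, hx⟩⟩

lemma alt_sum_msup_zero {n : ℕ} (b : Fin n → ℝ) (m : Fin n)
    (hb0 : b m = 0) (hb : ∀ i, 0 ≤ b i) :
    ∑ I ∈ Finset.univ.powerset.filter (fun I : Finset (Fin n) => I.Nonempty),
      (-1 : ℝ) ^ (I.card + 1) * msup b I = 0 := by
  classical
  set f : Finset (Fin n) → ℝ := fun I => (-1 : ℝ) ^ (I.card + 1) * msup b I with hf
  have hmsup_insert : ∀ I : Finset (Fin n), I.Nonempty → m ∉ I →
      msup b (insert m I) = msup b I := by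
    intro I hI hmI
    rw [msup_of_nonempty b (Finset.insert_nonempty m I), msup_of_nonempty b hI,
      Finset.sup'_insert, hb0]
    have h0 : (0 : ℝ) ≤ I.sup' hI b := by
      obtain ⟨x, hx⟩ := hI
      exact le_trans (hb x) (Finset.le_sup' b hx)
    exact max_eq_right h0
  apply Finset.sum_involution
    (g := fun I _ => if I = {m} then I else if m ∈ I then I.erase m else insert m I)
  · intro I hI
    simp only [Finset.mem_filter, Finset.mem_powerset] at hI
    by_cases h1 : I = {m}
    · subst h1
      simp only [if_pos rfl]
      have hms : msup b {m} = 0 := by rw [msup_singleton]; exact hb0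
      simp [hf, hms]
    · simp only [if_neg h1]
      by_cases h2 : m ∈ I
      · simp only [if_pos h2]
        have hne : (I.erase m).Nonempty := erase_nonempty_of_ne_singleton h2 h1
        have hm' : m ∉ I.erase m := Finset.notMem_erase m I
        have hmsup : msup b I = msup b (I.erase m) := by
          conv_lhs => rw [← Finset.insert_erase h2]
          exact hmsup_insert _ hne hm'
        have hcard : (I.erase m).card + 1 = I.card := Finset.card_erase_add_one h2
        show (-1 : ℝ) ^ (I.card + 1) * msup b I
            + (-1 : ℝ) ^ ((I.erase m).card + 1) * msup b (I.erase m) = 0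
        rw [hmsup, ← hcard]
        ring
      · simp only [if_neg h2]
        have hmsup : msup b (insert m I) = msup b I := hmsup_insert _ hI.2 h2
        have hcard : (insert m I).card = I.card + 1 := Finset.card_insert_of_notMem h2
        show (-1 : ℝ) ^ (I.card + 1) * msup b I
            + (-1 : ℝ) ^ ((insert m I).card + 1) * msup b (insert m I) = 0
        rw [hmsup, hcard]
        ring
  · intro I hI hfI
    by_cases h1 : I = {m}
    · exfalso
      apply hfI
      simp [hf, h1, msup_singleton, hb0]
    · simp only [if_neg h1]
      by_cases h2 : m ∈ I
      · simp only [if_pos h2]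
        intro hcon
        exact Finset.notMem_erase m I (by rw [hcon]; exact h2)
      · simp only [if_neg h2]
        intro hcon
        exact h2 (by rw [← hcon]; exact Finset.mem_insert_self m I)
  · intro I hI
    simp only [Finset.mem_filter, Finset.mem_powerset] at hI
    by_cases h1 : I = {m}
    · simp [h1]
    · simp only [if_neg h1]
      by_cases h2 : m ∈ I
      · simp only [if_pos h2]
        have hm' : m ∉ I.erase m := Finset.notMem_erase m I
        have hne : I.erase m ≠ {m} := by
          intro hcon
          exact hm' (hcon ▸ Finset.mem_singleton_self m)
        rw [if_neg hne, if_neg hm']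
        exact Finset.insert_erase h2
      · simp only [if_neg h2]
        have hne : insert m I ≠ {m} := by
          intro hcon
          obtain ⟨x, hx⟩ := hI.2
          have hx' : x ∈ insert m I := Finset.mem_insert_of_mem hx
          rw [hcon, Finset.mem_singleton] at hx'
          exact h2 (hx' ▸ hx)
        rw [if_neg hne, if_pos (Finset.mem_insert_self m I)]
        exact Finset.erase_insert h2
  · intro I hI
    simp only [Finset.mem_filter, Finset.mem_powerset] at hI
    by_cases h1 : I = {m}
    · simp only [if_pos h1]
      exact Finset.mem_filter.mpr ⟨Finset.mem_powerset.mpr hI.1, hI.2⟩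
    · simp only [if_neg h1]
      by_cases h2 : m ∈ I
      · simp only [if_pos h2]
        exact Finset.mem_filter.mpr ⟨Finset.mem_powerset.mpr (Finset.subset_univ _),
          erase_nonempty_of_ne_singleton h2 h1⟩
      · simp only [if_neg h2]
        exact Finset.mem_filter.mpr ⟨Finset.mem_powerset.mpr (Finset.subset_univ _),
          Finset.insert_nonempty m I⟩

lemma alt_sum_coeff {n : ℕ} (hn : 0 < n) :
    ∑ I ∈ Finset.univ.powerset.filter (fun I : Finset (Fin n) => I.Nonempty),
      ((-1 : ℝ) ^ (I.card + 1)) = 1 := by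
  classical
  haveI : Nonempty (Fin n) := Fin.pos_iff_nonempty.mp hn
  have huniv : (Finset.univ : Finset (Fin n)).Nonempty := Finset.univ_nonempty
  have h0 : (∑ I ∈ (Finset.univ : Finset (Fin n)).powerset, (-1 : ℤ) ^ I.card) = 0 :=
    Finset.sum_powerset_neg_one_pow_card_of_nonempty huniv
  have h0' : (∑ I ∈ (Finset.univ : Finset (Fin n)).powerset, (-1 : ℝ) ^ I.card) = 0 := by
    have := congrArg (Int.cast : ℤ → ℝ) h0
    push_cast at this
    exact this
  have hsplit : (Finset.univ : Finset (Fin n)).powerset =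
      insert (∅ : Finset (Fin n))
        ((Finset.univ : Finset (Fin n)).powerset.filter (fun I => I.Nonempty)) := by
    ext I
    simp [Finset.mem_powerset, Finset.subset_univ, Finset.nonempty_iff_ne_empty,
      or_comm, em]
  have hnotmem : (∅ : Finset (Fin n)) ∉
      (Finset.univ : Finset (Fin n)).powerset.filter (fun I => I.Nonempty) := by
    simp
  rw [hsplit, Finset.sum_insert hnotmem] at h0'
  simp only [Finset.card_empty, pow_zero] at h0'
  have hkey : (∑ I ∈ (Finset.univ : Finset (Fin n)).powerset.filter (fun I => I.Nonempty),
      (-1 : ℝ) ^ I.card) = -1 := by linarith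
  calc ∑ I ∈ Finset.univ.powerset.filter (fun I : Finset (Fin n) => I.Nonempty),
        ((-1 : ℝ) ^ (I.card + 1))
      = ∑ I ∈ Finset.univ.powerset.filter (fun I : Finset (Fin n) => I.Nonempty),
        (-1) * ((-1 : ℝ) ^ I.card) := by
        apply Finset.sum_congr rfl; intro I _; ring
    _ = (-1) * ∑ I ∈ Finset.univ.powerset.filter (fun I : Finset (Fin n) => I.Nonempty),
        ((-1 : ℝ) ^ I.card) := by rw [Finset.mul_sum]
    _ = 1 := by rw [hkey]; ring

lemma alt_sum_msup {n : ℕ} (hn : 0 < n) (a : Fin n → ℝ) (m : Fin n)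
    (hm : ∀ i, a m ≤ a i) :
    ∑ I ∈ Finset.univ.powerset.filter (fun I : Finset (Fin n) => I.Nonempty),
      (-1 : ℝ) ^ (I.card + 1) * msup a I = a m := by
  classical
  set b : Fin n → ℝ := fun i => a i - a m with hb
  have hb0 : b m = 0 := by simp [hb]
  have hbnn : ∀ i, 0 ≤ b i := fun i => by simp [hb]; exact hm i
  have key : ∀ I : Finset (Fin n), I.Nonempty → msup a I = a m + msup b I := by
    intro I hI
    rw [msup_of_nonempty a hI, msup_of_nonempty b hI]
    have h1 : I.sup' hI a = I.sup' hI (fun i => a m + b i) := by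
      apply Finset.sup'_congr hI rfl
      intro i _
      simp [hb]
    rw [h1]
    exact (Finset.comp_sup'_eq_sup'_comp hI (f := b) (fun x : ℝ => a m + x)
      (fun x y => (max_add_add_left _ _ _).symm)).symm
  calc ∑ I ∈ Finset.univ.powerset.filter (fun I : Finset (Fin n) => I.Nonempty),
        (-1 : ℝ) ^ (I.card + 1) * msup a I
      = ∑ I ∈ Finset.univ.powerset.filter (fun I : Finset (Fin n) => I.Nonempty),
        ((-1 : ℝ) ^ (I.card + 1) * a m + (-1 : ℝ) ^ (I.card + 1) * msup b I) := by
        apply Finset.sum_congr rfl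
        intro I hI
        simp only [Finset.mem_filter] at hI
        rw [key I hI.2]
        ring
    _ = (∑ I ∈ Finset.univ.powerset.filter (fun I : Finset (Fin n) => I.Nonempty),
          (-1 : ℝ) ^ (I.card + 1)) * a m +
        ∑ I ∈ Finset.univ.powerset.filter (fun I : Finset (Fin n) => I.Nonempty),
          (-1 : ℝ) ^ (I.card + 1) * msup b I := by
        rw [Finset.sum_add_distrib, Finset.sum_mul]
    _ = a m := by
        rw [alt_sum_coeff hn, alt_sum_msup_zero b m hb0 hbnn]
        ring

/-- The n-alternating plausibility inequality for `γ` on the algebra `S`. -/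
def PlausIneq {X : Type*} (S : Set (Set X)) (γ : Set X → ℝ) : Prop :=
  ∀ n : ℕ, 0 < n → ∀ U : Fin n → Set X, (∀ i, U i ∈ S) →
    γ (⋂ i, U i) ≤
      ∑ I ∈ Finset.univ.powerset.filter (fun I : Finset (Fin n) => I.Nonempty),
        (-1 : ℝ) ^ (I.card + 1) * γ (⋃ i ∈ I, U i)

/-- `γ` is a plausibility measure on the algebra `S`. -/
def IsPlaus {X : Type*} (S : Set (Set X)) (γ : Set X → ℝ) : Prop :=
  γ ∅ = 0 ∧ γ Set.univ = 1 ∧ PlausIneq S γ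

/-- every possibility measure is a plausibility measure. -/
theorem poss_is_plaus {X : Type*} (S : Set (Set X))
    (hSuniv : Set.univ ∈ S) (hScompl : ∀ A ∈ S, Aᶜ ∈ S)
    (hSunion : ∀ A ∈ S, ∀ B ∈ S, A ∪ B ∈ S)
    (Poss : Set X → ℝ)
    (h0 : Poss ∅ = 0) (h1 : Poss Set.univ = 1)
    (hmax : ∀ U ∈ S, ∀ V ∈ S, Poss (U ∪ V) = max (Poss U) (Poss V)) :
    PlausIneq S Poss := by
  intro n hn U hU
  classical
  haveI : Nonempty (Fin n) := Fin.pos_iff_nonempty.mp hn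
  have hempty : (∅ : Set X) ∈ S := by
    have := hScompl Set.univ hSuniv
    simpa using this
  -- finite unions stay in S
  have hUnionS : ∀ V : Fin n → Set X, (∀ i, V i ∈ S) →
      ∀ I : Finset (Fin n), (⋃ i ∈ I, V i) ∈ S := by
    intro V hV I
    induction I using Finset.induction_on with
    | empty => simpa using hempty
    | insert a s hx ih =>
      next =>
        rw [Finset.set_biUnion_insert]
        exact hSunion _ (hV a) _ ih
  -- Poss of a union over a nonempty finset is the sup' of values
  have hPossUnion : ∀ I : Finset (Fin n), ∀ h : I.Nonempty,
      Poss (⋃ i ∈ I, U i) = I.sup' h (fun i => Poss (U i)) := by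
    intro I h
    induction h using Finset.Nonempty.cons_induction with
    | singleton j => simp
    | cons a s ha hs ih =>
      have hcup : (⋃ i ∈ Finset.cons a s ha, U i) = U a ∪ ⋃ i ∈ s, U i := by
        simp [Finset.set_biUnion_insert]
      rw [hcup, hmax _ (hU a) _ (hUnionS U hU s), ih, Finset.sup'_cons hs]
  -- pick the minimizer
  obtain ⟨m, _, hm⟩ := Finset.exists_min_image (Finset.univ : Finset (Fin n))
    (fun i => Poss (U i)) Finset.univ_nonempty
  have hm' : ∀ i, Poss (U m) ≤ Poss (U i) := fun i => hm i (Finset.mem_univ i)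
  -- the intersection lies in S
  have hInterS : (⋂ i, U i) ∈ S := by
    have h1' : (⋃ i ∈ (Finset.univ : Finset (Fin n)), (U i)ᶜ) ∈ S :=
      hUnionS (fun i => (U i)ᶜ) (fun i => hScompl _ (hU i)) Finset.univ
    have h2' : (⋃ i ∈ (Finset.univ : Finset (Fin n)), (U i)ᶜ)ᶜ ∈ S := hScompl _ h1'
    have heq : (⋃ i ∈ (Finset.univ : Finset (Fin n)), (U i)ᶜ)ᶜ = ⋂ i, U i := by
      simp [Set.compl_iUnion]
    rwa [heq] at h2'
  -- monotonicity: Poss (⋂ U) ≤ Poss (U m)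
  have hmono : Poss (⋂ i, U i) ≤ Poss (U m) := by
    have hsub : (⋂ i, U i) ⊆ U m := Set.iInter_subset U m
    have hun : (⋂ i, U i) ∪ U m = U m := Set.union_eq_self_of_subset_left hsub
    have heq := hmax _ hInterS _ (hU m)
    rw [hun] at heq
    rw [heq]
    exact le_max_left _ _
  -- rewrite the sum
  have hsum : ∑ I ∈ Finset.univ.powerset.filter (fun I : Finset (Fin n) => I.Nonempty),
      (-1 : ℝ) ^ (I.card + 1) * Poss (⋃ i ∈ I, U i)
      = ∑ I ∈ Finset.univ.powerset.filter (fun I : Finset (Fin n) => I.Nonempty),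
      (-1 : ℝ) ^ (I.card + 1) * msup (fun i => Poss (U i)) I := by
    apply Finset.sum_congr rfl
    intro I hI
    simp only [Finset.mem_filter] at hI
    rw [hPossUnion I hI.2, msup_of_nonempty _ hI.2]
  rw [hsum, alt_sum_msup hn (fun i => Poss (U i)) m hm']
  exact hmono
end
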